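/- Let G be a group acting by homeomorphisms on topological spaces E, B and X, and let p : E → B be a continuous G-equivariant map admitting a G-equivariant lifting function: a continuous map Λ : Ω_p → C([0,1],E), where Ω_p = {(e,α) ∈ E × C([0,1],B) : α(0) = p(e)} carries the subspace topology (path spaces with the compact-open topology), satisfying Λ(e,α)(0) = e, p(Λ(e,α)(t)) = α(t) for all t, Λ(e, const_{p(e)})(t) = e for all t, and Λ(g·e, g·α) = g·Λ(e,α) for all g ∈ G (where (g·α)(t) = g·α(t)). Let A ⊆ X be a closed G-invariant subset, and let H̄ : (X×{0}) ∪ (A×[0,1]) → E be a continuous G-equivariant map with p(H̄(a,t)) = p(H̄(a,0)) for all (a,t) ∈ A×[0,1]. Suppose H̄ admits some continuous G-equivariant extension H' : X × [0,1] → E. Then the map H : X × [0,1] → E defined by H(x,t) = Λ( H'(x,t), s ↦ p(H'(x,(1−s)t)) )(1) is continuous, G-equivariant, extends H̄ (that is, H(x,0) = H̄(x,0) for all x ∈ X and H(a,t) = H̄(a,t) for all (a,t) ∈ A×[0,1]), and satisfies p(H(x,t)) = p(H(x,0)) for all (x,t) ∈ X × [0,1]. -/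

import Mathlib

/-- The action of a group element on a path, acting pointwise. -/
def smulPath {G B : Type*} [TopologicalSpace B] [SMul G B]
    (hGB : ∀ g : G, Continuous fun b : B => g • b) (g : G)
    (α : C(unitInterval, B)) : C(unitInterval, B) :=
  ⟨fun s => g • α s, (hGB g).comp α.continuous⟩

/-- The path `s ↦ p (H' (x, (1-s)·t))` in the base, traced backwards from `p (H' (x,t))`
to `p (H' (x,0))`. -/
def basePath {X B E : Type*} [TopologicalSpace X] [TopologicalSpace B] [TopologicalSpace E]
    (p : E → B) (hp : Continuous p) (H' : X × unitInterval → E) (hH' : Continuous H')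
    (x : X) (t : unitInterval) : C(unitInterval, B) :=
  ⟨fun s => p (H' (x, unitInterval.symm s * t)),
    hp.comp (hH'.comp (continuous_const.prodMk
      (Continuous.subtype_mk
        ((continuous_subtype_val.comp unitInterval.continuous_symm).mul continuous_const) _)))⟩

/-- Given a `G`-fibration `p : E → B` (i.e. a `G`-equivariant map with a `G`-equivariant
lifting function `Λ`), a closed `G`-invariant subset `A ⊆ X`, a `G`-map
`H̄ : (X×{0}) ∪ (A×I) → E` that is `p`-vertical on `A × I`, and a `G`-equivariant
extension `H' : X × I → E` of `H̄`, the map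
`H(x,t) = Λ(H'(x,t), s ↦ p (H'(x,(1-s)t)))(1)` is a continuous `G`-equivariant extension
of `H̄` which is `p`-vertical everywhere: `p (H (x,t)) = p (H (x,0))`. -/
theorem equivariant_vertical_extension
    {G E B X : Type*} [Group G]
    [TopologicalSpace E] [TopologicalSpace B] [TopologicalSpace X]
    [MulAction G E] [MulAction G B] [MulAction G X]
    (hGE : ∀ g : G, Continuous fun e : E => g • e)
    (hGB : ∀ g : G, Continuous fun b : B => g • b)
    (hGX : ∀ g : G, Continuous fun x : X => g • x)
    (p : E → B) (hp : Continuous p) (hpeq : ∀ (g : G) (e : E), p (g • e) = g • p e)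
    (Λ : {q : E × C(unitInterval, B) // q.2 0 = p q.1} → C(unitInterval, E))
    (hΛcont : Continuous Λ)
    (hΛstart : ∀ q, Λ q 0 = q.1.1)
    (hΛlift : ∀ q (t : unitInterval), p (Λ q t) = q.1.2 t)
    (hΛconst : ∀ (e : E) (t : unitInterval),
      Λ ⟨(e, ContinuousMap.const unitInterval (p e)), rfl⟩ t = e)
    (hΛequiv : ∀ (g : G) (q : {q : E × C(unitInterval, B) // q.2 0 = p q.1})
        (t : unitInterval),
      Λ ⟨(g • q.1.1, smulPath hGB g q.1.2), by
          show g • q.1.2 0 = p (g • q.1.1)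
          rw [q.2, hpeq]⟩ t = g • Λ q t)
    (A : Set X) (hAclosed : IsClosed A)
    (hAinv : ∀ (g : G) (a : X), a ∈ A → g • a ∈ A)
    (S : Set (X × unitInterval))
    (hS : S = (Set.univ ×ˢ ({0} : Set unitInterval)) ∪ (A ×ˢ Set.univ))
    (Hbar : X × unitInterval → E)
    (hHbarCont : ContinuousOn Hbar S)
    (hHbarEquiv : ∀ (g : G) (x : X) (t : unitInterval),
      (x, t) ∈ S → Hbar (g • x, t) = g • Hbar (x, t))
    (hHbarVert : ∀ a ∈ A, ∀ t : unitInterval, p (Hbar (a, t)) = p (Hbar (a, 0)))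
    (H' : X × unitInterval → E) (hH'cont : Continuous H')
    (hH'equiv : ∀ (g : G) (x : X) (t : unitInterval), H' (g • x, t) = g • H' (x, t))
    (hH'ext : Set.EqOn H' Hbar S)
    (H : X × unitInterval → E)
    (hHdef : ∀ (x : X) (t : unitInterval),
      H (x, t) = Λ ⟨(H' (x, t), basePath p hp H' hH'cont x t), by
        show p (H' (x, unitInterval.symm 0 * t)) = p (H' (x, t))
        rw [unitInterval.symm_zero, one_mul]⟩ 1) :
    Continuous H ∧
    (∀ (g : G) (x : X) (t : unitInterval), H (g • x, t) = g • H (x, t)) ∧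
    (∀ x : X, H (x, 0) = Hbar (x, 0)) ∧
    (∀ a ∈ A, ∀ t : unitInterval, H (a, t) = Hbar (a, t)) ∧
    (∀ (x : X) (t : unitInterval), p (H (x, t)) = p (H (x, 0))) := by
    -- auxiliary facts
  have hmulzero : ∀ s : unitInterval, unitInterval.symm s * (0 : unitInterval) = 0 := by
    intro s; ext; simp
  have honemul : ∀ t : unitInterval, unitInterval.symm 0 * t = t := by
    intro t; rw [unitInterval.symm_zero, one_mul]
  have hzeromul : ∀ t : unitInterval, unitInterval.symm 1 * t = 0 := by
    intro t; rw [unitInterval.symm_one, zero_mul]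
  have hmemS0 : ∀ x : X, (x, (0 : unitInterval)) ∈ S := by
    intro x; rw [hS]; exact Or.inl ⟨trivial, rfl⟩
  have hmemSA : ∀ a ∈ A, ∀ t : unitInterval, (a, t) ∈ S := by
    intro a ha t; rw [hS]; exact Or.inr ⟨ha, trivial⟩
  -- the map into the domain of Λ
  set Φ : X × unitInterval → {q : E × C(unitInterval, B) // q.2 0 = p q.1} :=
    fun q => ⟨(H' q, basePath p hp H' hH'cont q.1 q.2), by
      show p (H' (q.1, unitInterval.symm 0 * q.2)) = p (H' q)
      rw [honemul]⟩ with hΦ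
  have hHΦ : ∀ (x : X) (t : unitInterval), H (x, t) = Λ (Φ (x, t)) 1 := by
    intro x t; rw [hHdef]
  -- value of H at t = 0 and on A
  have hH0 : ∀ x : X, H (x, 0) = H' (x, 0) := by
    intro x
    rw [hHΦ]
    have hpath : basePath p hp H' hH'cont x 0 =
        ContinuousMap.const unitInterval (p (H' (x, 0))) := by
      ext s
      show p (H' (x, unitInterval.symm s * 0)) = p (H' (x, 0))
      rw [hmulzero]
    have : Φ (x, 0) = ⟨(H' (x, 0), ContinuousMap.const unitInterval (p (H' (x, 0)))), rfl⟩ := by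
      apply Subtype.ext
      show (H' (x, 0), basePath p hp H' hH'cont x 0) = _
      rw [hpath]
    rw [this, hΛconst]
  have hHA : ∀ a ∈ A, ∀ t : unitInterval, H (a, t) = H' (a, t) := by
    intro a ha t
    rw [hHΦ]
    have hconst : ∀ u : unitInterval, p (H' (a, u)) = p (H' (a, t)) := by
      intro u
      rw [hH'ext (hmemSA a ha u), hH'ext (hmemSA a ha t),
        hHbarVert a ha u, hHbarVert a ha t]
    have hpath : basePath p hp H' hH'cont a t =
        ContinuousMap.const unitInterval (p (H' (a, t))) := by
      ext s
      show p (H' (a, unitInterval.symm s * t)) = p (H' (a, t))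
      exact hconst _
    have : Φ (a, t) = ⟨(H' (a, t), ContinuousMap.const unitInterval (p (H' (a, t)))), rfl⟩ := by
      apply Subtype.ext
      show (H' (a, t), basePath p hp H' hH'cont a t) = _
      rw [hpath]
    rw [this, hΛconst]
  refine ⟨?_, ?_, ?_, ?_, ?_⟩
  · -- continuity
    have hΦcont : Continuous Φ := by
      apply Continuous.subtype_mk
      apply hH'cont.prodMk
      apply ContinuousMap.continuous_of_continuous_uncurry
      show Continuous fun w : (X × unitInterval) × unitInterval =>
        p (H' (w.1.1, unitInterval.symm w.2 * w.1.2))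
      apply hp.comp
      apply hH'cont.comp
      apply Continuous.prodMk
      · exact continuous_fst.fst
      · apply Continuous.subtype_mk
        exact ((continuous_subtype_val.comp
          (unitInterval.continuous_symm.comp continuous_snd)).mul
          (continuous_subtype_val.comp continuous_fst.snd))
    have : H = fun q => Λ (Φ q) 1 := by
      funext q
      obtain ⟨x, t⟩ := q
      exact hHΦ x t
    rw [this]
    exact (continuous_eval_const 1).comp (hΛcont.comp hΦcont)
  · -- equivariance
    intro g x t
    rw [hHΦ, hHΦ]
    have hpath : basePath p hp H' hH'cont (g • x) t =
        smulPath hGB g (basePath p hp H' hH'cont x t) := by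
      ext s
      show p (H' (g • x, unitInterval.symm s * t)) =
        g • p (H' (x, unitInterval.symm s * t))
      rw [hH'equiv, hpeq]
    have : Φ (g • x, t) = ⟨(g • (Φ (x, t)).1.1, smulPath hGB g (Φ (x, t)).1.2), by
        show g • (Φ (x, t)).1.2 0 = p (g • (Φ (x, t)).1.1)
        rw [(Φ (x, t)).2, hpeq]⟩ := by
      apply Subtype.ext
      show (H' (g • x, t), basePath p hp H' hH'cont (g • x) t) = _
      rw [hpath, hH'equiv]
    rw [this, hΛequiv]
  · -- extends at t = 0
    intro x
    rw [hH0, hH'ext (hmemS0 x)]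
  · -- extends on A
    intro a ha t
    rw [hHA a ha t, hH'ext (hmemSA a ha t)]
  · -- verticality
    intro x t
    rw [hHΦ, hΛlift]
    show p (H' (x, unitInterval.symm 1 * t)) = p (H (x, 0))
    rw [hzeromul, hH0 x]
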